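/- Let n ≥ 3, k, l integers with 1 ≤ k ≤ n, and ν ∈ ℝ with ν ≥ min{(1-k)/2, (k-n)/2}. Then the integral ∫_{ℝ^{k-1}} ∫_{ℝ^{n-k}} (2 + 4‖x‖² + 4‖y‖² + 4‖x‖²‖y‖²)^ν dy dx diverges. -/

import Mathlib

open MeasureTheory Real Set Metric
open scoped ENNReal

lemma aux_lintegral_rpow_top {s t0 : ℝ} (hs : s ≤ -1) (ht0 : 0 < t0) :
    ∫⁻ t in Ioo (0:ℝ) t0, ENNReal.ofReal (t ^ s) = ∞ := by
  by_contra hne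
  have hmeas : Measurable fun t : ℝ => t ^ s := by fun_prop
  have hint : IntegrableOn (fun t : ℝ => t ^ s) (Ioo 0 t0) := by
    refine ⟨hmeas.aestronglyMeasurable, ?_⟩
    rw [hasFiniteIntegral_iff_ofReal
      (ae_restrict_of_forall_mem measurableSet_Ioo fun x hx => Real.rpow_nonneg hx.1.le _)]
    exact lt_top_iff_ne_top.mpr hne
  have := (intervalIntegral.integrableOn_Ioo_rpow_iff ht0).mp hint
  linarith

lemma aux_not_integrable (D : ℕ) (ν : ℝ) (hν : -(D:ℝ)/2 ≤ ν) (hν0 : ν < 0) :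
    ¬ Integrable (fun x : EuclideanSpace ℝ (Fin D) => (1 + ‖x‖^2) ^ ν) := by
  intro hint
  set R : ℝ := -(2*ν) with hRdef
  have hRpos : 0 < R := by simp only [hRdef]; linarith
  have hRD : R ≤ (D:ℝ) := by simp only [hRdef]; linarith
  set s : ℝ := -R⁻¹ * (D:ℝ) with hsdef
  have hs : s ≤ -1 := by
    have h1 : (1:ℝ) ≤ R⁻¹ * D := by
      rw [le_inv_mul_iff₀ hRpos]; simpa using hRD
    simp only [hsdef, neg_mul]
    linarith
  have hmeas : Measurable fun x : EuclideanSpace ℝ (Fin D) => (1+‖x‖) ^ (-R) := by fun_prop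
  have hle : ∀ x : EuclideanSpace ℝ (Fin D), (1+‖x‖) ^ (-R) ≤ (1+‖x‖^2) ^ ν := by
    intro x
    have h1 : (0:ℝ) < 1 + ‖x‖^2 := by positivity
    have h2 : (1:ℝ) + ‖x‖^2 ≤ (1+‖x‖)^2 := by nlinarith [norm_nonneg x]
    have h3 := Real.rpow_le_rpow_of_nonpos h1 h2 hν0.le
    have h4 : (((1:ℝ)+‖x‖)^2 : ℝ) ^ ν = (1+‖x‖) ^ (-R) := by
      rw [← Real.rpow_natCast (1+‖x‖) 2, ← Real.rpow_mul (by positivity)]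
      push_cast [hRdef]
      ring
    rw [h4] at h3
    exact h3
  have hIh : Integrable (fun x : EuclideanSpace ℝ (Fin D) => (1+‖x‖) ^ (-R)) := by
    refine hint.mono' hmeas.aestronglyMeasurable (Filter.Eventually.of_forall fun x => ?_)
    rw [Real.norm_eq_abs, abs_of_nonneg (Real.rpow_nonneg (by positivity) _)]
    exact hle x
  have hfin : (∫⁻ x : EuclideanSpace ℝ (Fin D), ENNReal.ofReal ((1+‖x‖) ^ (-R))) < ∞ := by
    have h := hIh.hasFiniteIntegral
    rwa [hasFiniteIntegral_iff_ofReal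
      (Filter.Eventually.of_forall fun x => Real.rpow_nonneg (by positivity) _)] at h
  rw [lintegral_eq_lintegral_meas_le volume
    (Filter.Eventually.of_forall fun x => Real.rpow_nonneg (by positivity) _)
    hmeas.aemeasurable] at hfin
  set t0 : ℝ := (2:ℝ) ^ (-R) with ht0def
  have ht0 : 0 < t0 := Real.rpow_pos_of_pos two_pos _
  set K : ℝ≥0∞ := ENNReal.ofReal (((2:ℝ)^D)⁻¹) * volume (ball (0:EuclideanSpace ℝ (Fin D)) 1)
    with hKdef
  have hK0 : K ≠ 0 := by
    refine mul_ne_zero ?_ (measure_ball_pos volume 0 one_pos).ne'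
    exact (ENNReal.ofReal_pos.mpr (by positivity)).ne'
  have claim : ∀ t ∈ Ioo (0:ℝ) t0,
      ENNReal.ofReal (t ^ s) * K
        ≤ volume {a : EuclideanSpace ℝ (Fin D) | t ≤ (1+‖a‖) ^ (-R)} := by
    rintro t ⟨ht1, ht2⟩
    have h2t : (2:ℝ) ≤ t ^ (-R⁻¹) := by
      have hz : -R⁻¹ < 0 := by simp [hRpos]
      have hlt : t0 ^ (-R⁻¹) < t ^ (-R⁻¹) := Real.rpow_lt_rpow_of_neg ht1 ht2 hz
      have ht0e : t0 ^ (-R⁻¹) = 2 := by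
        rw [ht0def, ← Real.rpow_mul (by norm_num : (0:ℝ) ≤ 2), neg_mul_neg,
          mul_inv_cancel₀ hRpos.ne', Real.rpow_one]
      linarith
    have hρ0 : (0:ℝ) ≤ t ^ (-R⁻¹) - 1 := by linarith
    have hset : {a : EuclideanSpace ℝ (Fin D) | t ≤ (1+‖a‖) ^ (-R)}
        = closedBall (0:EuclideanSpace ℝ (Fin D)) (t ^ (-R⁻¹) - 1) := by
      ext a
      simp only [mem_setOf_eq, mem_closedBall_zero_iff]
      exact le_rpow_one_add_norm_iff_norm_le hRpos ht1 a
    rw [hset, Measure.addHaar_closedBall volume (0:EuclideanSpace ℝ (Fin D)) hρ0,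
      finrank_euclideanSpace_fin, hKdef, ← mul_assoc,
      ← ENNReal.ofReal_mul (Real.rpow_nonneg ht1.le _)]
    refine mul_le_mul_left (ENNReal.ofReal_le_ofReal ?_) _
    have hts : t ^ s = (t ^ (-R⁻¹)) ^ D := by
      rw [← Real.rpow_natCast (t ^ (-R⁻¹)) D, ← Real.rpow_mul ht1.le]
    calc t ^ s * ((2:ℝ)^D)⁻¹ = (t ^ (-R⁻¹) / 2) ^ D := by
          rw [hts, div_pow]; ring
      _ ≤ (t ^ (-R⁻¹) - 1) ^ D := by
          apply pow_le_pow_left₀ (by positivity) (by linarith)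
  have hmeas2 : Measurable fun t : ℝ => ENNReal.ofReal (t ^ s) := by fun_prop
  have htop : (∞:ℝ≥0∞)
      ≤ ∫⁻ t in Ioi (0:ℝ), volume {a : EuclideanSpace ℝ (Fin D) | t ≤ (1+‖a‖) ^ (-R)} := by
    calc (∞:ℝ≥0∞) = (∫⁻ t in Ioo (0:ℝ) t0, ENNReal.ofReal (t ^ s)) * K := by
          rw [aux_lintegral_rpow_top hs ht0, ENNReal.top_mul hK0]
      _ = ∫⁻ t in Ioo (0:ℝ) t0, ENNReal.ofReal (t ^ s) * K :=
          (lintegral_mul_const K hmeas2).symm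
      _ ≤ ∫⁻ t in Ioo (0:ℝ) t0,
            volume {a : EuclideanSpace ℝ (Fin D) | t ≤ (1+‖a‖) ^ (-R)} :=
          setLIntegral_mono' measurableSet_Ioo claim
      _ ≤ _ := lintegral_mono_set (fun x hx => hx.1)
  exact absurd (lt_of_le_of_lt htop hfin) (lt_irrefl _)

lemma aux_volume_univ (d : ℕ) (hd : 1 ≤ d) :
    volume (Set.univ : Set (EuclideanSpace ℝ (Fin d))) = ∞ := by
  haveI : Nonempty (Fin d) := ⟨⟨0, hd⟩⟩
  haveI : Nontrivial (EuclideanSpace ℝ (Fin d)) := by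
    infer_instance
  exact MeasureTheory.measure_univ_of_isAddLeftInvariant volume

lemma aux_volume_ne_zero (d : ℕ) :
    volume (Set.univ : Set (EuclideanSpace ℝ (Fin d))) ≠ 0 :=
  (isOpen_univ.measure_pos volume univ_nonempty).ne'

/-- for `1 ≤ k ≤ n` and `ν ≥ min{(1-k)/2, (k-n)/2}`, the integral
`∫_{ℝ^{k-1}}∫_{ℝ^{n-k}} (2+4‖x‖²+4‖y‖²+4‖x‖²‖y‖²)^ν dy dx` diverges. -/
theorem stmt_8 (n k : ℕ) (hn : 3 ≤ n) (hk1 : 1 ≤ k) (hkn : k ≤ n) (ν : ℝ)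
    (hν : min ((1 - (k:ℝ))/2) (((k:ℝ) - n)/2) ≤ ν) :
    ¬ Integrable (fun q : EuclideanSpace ℝ (Fin (k-1)) × EuclideanSpace ℝ (Fin (n-k)) =>
      (2 + 4*‖q.1‖^2 + 4*‖q.2‖^2 + 4*‖q.1‖^2*‖q.2‖^2) ^ ν) := by
  intro hInt
  have hcast1 : ((k-1 : ℕ) : ℝ) = (k:ℝ) - 1 := by
    push_cast [Nat.cast_sub hk1]; ring
  have hcast2 : ((n-k : ℕ) : ℝ) = (n:ℝ) - k := by
    push_cast [Nat.cast_sub hkn]; ring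
  rw [Measure.volume_eq_prod] at hInt
  rcases le_or_gt 0 ν with hpos | hneg
  · -- `ν ≥ 0` : the integrand is bounded below by a positive constant on an
    -- infinite measure space.
    have hconst : Integrable
        (fun _ : EuclideanSpace ℝ (Fin (k-1)) × EuclideanSpace ℝ (Fin (n-k)) => (2:ℝ)^ν)
        (volume.prod volume) := by
      refine hInt.mono' aestronglyMeasurable_const (Filter.Eventually.of_forall fun q => ?_)
      rw [Real.norm_eq_abs, abs_of_nonneg (Real.rpow_nonneg (by norm_num) _)]
      have h2 : (2:ℝ) ≤ 2 + 4*‖q.1‖^2 + 4*‖q.2‖^2 + 4*‖q.1‖^2*‖q.2‖^2 := by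
        nlinarith [sq_nonneg ‖q.1‖, sq_nonneg ‖q.2‖, mul_nonneg (sq_nonneg ‖q.1‖) (sq_nonneg ‖q.2‖)]
      exact Real.rpow_le_rpow (by norm_num) h2 hpos
    rw [integrable_const_iff] at hconst
    rcases hconst with h | h
    · exact absurd h (Real.rpow_pos_of_pos two_pos ν).ne'
    · rw [isFiniteMeasure_iff, ← univ_prod_univ, Measure.prod_prod] at h
      rcases le_or_gt 1 (k-1) with hk' | hk'
      · rw [aux_volume_univ _ hk', ENNReal.top_mul (aux_volume_ne_zero _)] at h
        exact absurd h (by simp)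
      · have hnk : 1 ≤ n - k := by omega
        rw [aux_volume_univ _ hnk, ENNReal.mul_top (aux_volume_ne_zero _)] at h
        exact absurd h (by simp)
  · -- `ν < 0`
    rcases min_le_iff.mp hν with hcase | hcase
    · -- divergence in the `x` direction
      have hd : -(((k-1 : ℕ)):ℝ)/2 ≤ ν := by rw [hcast1]; linarith
      haveI : (ae (volume : Measure (EuclideanSpace ℝ (Fin (n-k))))).NeBot :=
        ae_neBot.mpr (fun hvol => aux_volume_ne_zero (n-k) (by rw [hvol]; simp))
      obtain ⟨y0, hy0⟩ := hInt.prod_left_ae.exists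
      set c : ℝ := 4 + 4*‖y0‖^2 with hcdef
      have hc : 0 < c := by positivity
      have hcν : 0 < c ^ ν := Real.rpow_pos_of_pos hc _
      have hb : ∀ x : EuclideanSpace ℝ (Fin (k-1)),
          (1+‖x‖^2)^ν * c^ν
            ≤ (2 + 4*‖x‖^2 + 4*‖y0‖^2 + 4*‖x‖^2*‖y0‖^2) ^ ν := by
        intro x
        have h1 : (0:ℝ) < 2 + 4*‖x‖^2 + 4*‖y0‖^2 + 4*‖x‖^2*‖y0‖^2 := by positivity
        have h2 : 2 + 4*‖x‖^2 + 4*‖y0‖^2 + 4*‖x‖^2*‖y0‖^2 ≤ (1+‖x‖^2) * c := by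
          simp only [hcdef]; nlinarith [sq_nonneg ‖x‖, sq_nonneg ‖y0‖]
        have h3 := Real.rpow_le_rpow_of_nonpos h1 h2 hneg.le
        rwa [Real.mul_rpow (by positivity) hc.le] at h3
      have hg : Integrable (fun x : EuclideanSpace ℝ (Fin (k-1)) => (1+‖x‖^2)^ν) := by
        refine ((hy0.const_mul ((c^ν)⁻¹))).mono' ?_ (Filter.Eventually.of_forall fun x => ?_)
        · refine Continuous.aestronglyMeasurable ?_
          exact (continuous_const.add ((continuous_norm).pow 2)).rpow_const
            (fun x => Or.inl (add_pos_of_pos_of_nonneg one_pos (sq_nonneg _)).ne')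
        · rw [Real.norm_eq_abs, abs_of_nonneg (Real.rpow_nonneg (by positivity) _),
            le_inv_mul_iff₀ hcν, mul_comm]
          exact hb x
      exact aux_not_integrable (k-1) ν hd hneg hg
    · -- divergence in the `y` direction
      have hd : -(((n-k : ℕ)):ℝ)/2 ≤ ν := by rw [hcast2]; linarith
      haveI : (ae (volume : Measure (EuclideanSpace ℝ (Fin (k-1))))).NeBot :=
        ae_neBot.mpr (fun hvol => aux_volume_ne_zero (k-1) (by rw [hvol]; simp))
      obtain ⟨x0, hx0⟩ := hInt.prod_right_ae.exists
      set c : ℝ := 4 + 4*‖x0‖^2 with hcdef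
      have hc : 0 < c := by positivity
      have hcν : 0 < c ^ ν := Real.rpow_pos_of_pos hc _
      have hb : ∀ y : EuclideanSpace ℝ (Fin (n-k)),
          (1+‖y‖^2)^ν * c^ν
            ≤ (2 + 4*‖x0‖^2 + 4*‖y‖^2 + 4*‖x0‖^2*‖y‖^2) ^ ν := by
        intro y
        have h1 : (0:ℝ) < 2 + 4*‖x0‖^2 + 4*‖y‖^2 + 4*‖x0‖^2*‖y‖^2 := by positivity
        have h2 : 2 + 4*‖x0‖^2 + 4*‖y‖^2 + 4*‖x0‖^2*‖y‖^2 ≤ (1+‖y‖^2) * c := by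
          simp only [hcdef]; nlinarith [sq_nonneg ‖y‖, sq_nonneg ‖x0‖]
        have h3 := Real.rpow_le_rpow_of_nonpos h1 h2 hneg.le
        rwa [Real.mul_rpow (by positivity) hc.le] at h3
      have hg : Integrable (fun y : EuclideanSpace ℝ (Fin (n-k)) => (1+‖y‖^2)^ν) := by
        refine ((hx0.const_mul ((c^ν)⁻¹))).mono' ?_ (Filter.Eventually.of_forall fun y => ?_)
        · refine Continuous.aestronglyMeasurable ?_
          exact (continuous_const.add ((continuous_norm).pow 2)).rpow_const
            (fun y => Or.inl (add_pos_of_pos_of_nonneg one_pos (sq_nonneg _)).ne')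
        · rw [Real.norm_eq_abs, abs_of_nonneg (Real.rpow_nonneg (by positivity) _),
            le_inv_mul_iff₀ hcν, mul_comm]
          exact hb y
      exact aux_not_integrable (n-k) ν hd hneg hg
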